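/- Let G' be an ε-approximation of connected network G, and define K' = Σ_i x'_i - y' where x'_i = k_i e_iᵀ L_{G'}^# e_i and y' = (1/vol(G)) kᵀ L_{G'}^# k. Then K(G) - (ε/(1+ε))(K(G) + (2+ε)y) ≤ K' ≤ K(G) + ε(K(G) + ((2+ε)/(1+ε))y), where y = (1/vol(G)) kᵀ L_G^# k. -/

import Mathlib

open Matrix Finset

/-- Theorem 4.5(ii): if `G'` is an `ε`-approximation of connected `G` (so the quadratic
forms of the group inverses of the Laplacians agree up to factor `1+ε`), with
`x'ᵢ = kᵢ eᵢᵀ L_{G'}^# eᵢ`, `y = (1/vol) kᵀ L_G^# k`, `y' = (1/vol) kᵀ L_{G'}^# k`,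
`K = ∑ xᵢ - y` (Kemeny's constant) and `K' = ∑ x'ᵢ - y'`, then
`K - (ε/(1+ε))(K+(2+ε)y) ≤ K' ≤ K + ε(K + ((2+ε)/(1+ε))y)`. -/
theorem kemeny_approx_Kp {n : ℕ} (ε : ℝ) (hε : 0 < ε)
    (k : Fin n → ℝ) (hk : ∀ i, 0 ≤ k i)
    (vol : ℝ) (hvol : vol = ∑ i, k i) (hvolpos : 0 < vol)
    (Lp Lp' : Matrix (Fin n) (Fin n) ℝ)
    (hLp : Lp.PosSemidef) (hLp' : Lp'.PosSemidef)
    (happrox : ∀ z : Fin n → ℝ,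
      (1/(1+ε)) * (z ⬝ᵥ Lp.mulVec z) ≤ z ⬝ᵥ Lp'.mulVec z ∧
        z ⬝ᵥ Lp'.mulVec z ≤ (1+ε) * (z ⬝ᵥ Lp.mulVec z))
    (x x' : Fin n → ℝ)
    (hx : ∀ i, x i = k i * ((Pi.single i 1 : Fin n → ℝ) ⬝ᵥ Lp.mulVec (Pi.single i 1)))
    (hx' : ∀ i, x' i = k i * ((Pi.single i 1 : Fin n → ℝ) ⬝ᵥ Lp'.mulVec (Pi.single i 1)))
    (y y' K K' : ℝ)
    (hy : y = (1/vol) * (k ⬝ᵥ Lp.mulVec k))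
    (hy' : y' = (1/vol) * (k ⬝ᵥ Lp'.mulVec k))
    (hK : K = (∑ i, x i) - y)
    (hK' : K' = (∑ i, x' i) - y') :
    K - (ε/(1+ε)) * (K + (2+ε) * y) ≤ K' ∧
      K' ≤ K + ε * (K + ((2+ε)/(1+ε)) * y) := by
  have hε1 : (0:ℝ) < 1 + ε := by linarith
  set A := ∑ i, x i with hA
  set A' := ∑ i, x' i with hA'
  -- pointwise bounds
  have hxlb : ∀ i, (1/(1+ε)) * x i ≤ x' i := by
    intro i
    rw [hx, hx']
    have := (happrox (Pi.single i 1)).1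
    have hki := hk i
    nlinarith [this, hki]
  have hxub : ∀ i, x' i ≤ (1+ε) * x i := by
    intro i
    rw [hx, hx']
    have := (happrox (Pi.single i 1)).2
    have hki := hk i
    nlinarith [this, hki]
  have hAlb : (1/(1+ε)) * A ≤ A' := by
    rw [hA, hA', Finset.mul_sum]
    exact Finset.sum_le_sum fun i _ => hxlb i
  have hAub : A' ≤ (1+ε) * A := by
    rw [hA, hA', Finset.mul_sum]
    exact Finset.sum_le_sum fun i _ => hxub i
  have hvinv : 0 < 1/vol := by positivity
  have hylb : (1/(1+ε)) * y ≤ y' := by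
    rw [hy, hy']
    have := (happrox k).1
    nlinarith [this, hvinv]
  have hyub : y' ≤ (1+ε) * y := by
    rw [hy, hy']
    have := (happrox k).2
    nlinarith [this, hvinv]
  have hy0 : 0 ≤ y := by
    rw [hy]
    have := hLp.dotProduct_mulVec_nonneg k
    positivity
  have hAlb' : A ≤ (1+ε) * A' := by
    have h := mul_le_mul_of_nonneg_left hAlb hε1.le
    have he : (1+ε) * (1/(1+ε) * A) = A := by field_simp
    linarith [h, he.symm.le]
  have hylb' : y ≤ (1+ε) * y' := by
    have h := mul_le_mul_of_nonneg_left hylb hε1.le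
    have he : (1+ε) * (1/(1+ε) * y) = y := by field_simp
    linarith [h, he.symm.le]
  constructor
  · have key : (K - K') * (1+ε) ≤ ε * (K + (2+ε)*y) := by
      rw [hK, hK']; nlinarith [hAlb', hyub, hε1]
    have h5 : K - K' ≤ ε/(1+ε) * (K + (2+ε)*y) := by
      rw [div_mul_eq_mul_div, le_div_iff₀ hε1]; linarith
    linarith
  · have key2 : (K' - (K + ε*K)) * (1+ε) ≤ ε * ((2+ε)*y) := by
      rw [hK, hK']; nlinarith [hAub, hylb', hε1]
    have h6 : K' - (K + ε*K) ≤ ε * ((2+ε)/(1+ε) * y) := by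
      rw [show ε * ((2+ε)/(1+ε) * y) = ε * ((2+ε)*y) / (1+ε) from by ring,
        le_div_iff₀ hε1]
      linarith
    linarith
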